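/- Let X be a finite type with at least 2 elements, and let σ be a permutation of X that is a cyclic permutation whose support is all of X (i.e. σ is an |X|-cycle). Let P_σ be the permutation matrix of σ over ℤ, i.e. P_σ(i, j) = 1 if i = σ(j) and 0 otherwise. Then det(I + P_σ) = 1 + sign(σ), where I is the identity matrix and sign(σ) ∈ {±1} is the signature of σ. In particular det(I + P_σ) = 2 when |X| is odd and det(I + P_σ) = 0 when |X| is even. -/
import Mathlib

theorem det_one_add_perm_matrix {X : Type*} [Fintype X] [DecidableEq X]
    (hX : 2 ≤ Fintype.card X) (σ : Equiv.Perm X) (hc : σ.IsCycle)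
    (hsupp : σ.support = Finset.univ) :
    ((1 : Matrix X X ℤ) + Matrix.of fun i j : X => if i = σ j then (1 : ℤ) else 0).det
        = 1 + (Equiv.Perm.sign σ : ℤ) ∧
    (Odd (Fintype.card X) →
      ((1 : Matrix X X ℤ) + Matrix.of fun i j : X => if i = σ j then (1 : ℤ) else 0).det = 2) ∧
    (Even (Fintype.card X) →
      ((1 : Matrix X X ℤ) + Matrix.of fun i j : X => if i = σ j then (1 : ℤ) else 0).det = 0) := by
  have hmove : ∀ x : X, σ x ≠ x := by
    intro x
    have : x ∈ σ.support := by rw [hsupp]; exact Finset.mem_univ x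
    exact Equiv.Perm.mem_support.mp this
  set M : Matrix X X ℤ :=
    (1 : Matrix X X ℤ) + Matrix.of fun i j : X => if i = σ j then (1 : ℤ) else 0 with hM
  have hMentry : ∀ i j, M i j = (if i = j then (1:ℤ) else 0) + (if i = σ j then 1 else 0) := by
    intro i j
    simp [hM, Matrix.one_apply]
  -- the Leibniz term
  have key : M.det = 1 + (Equiv.Perm.sign σ : ℤ) := by
    rw [Matrix.det_apply]
    have hnon : Nonempty X := Fintype.card_pos_iff.mp (by omega)
    have hne : (1 : Equiv.Perm X) ≠ σ := by
      intro h
      exact hmove (Classical.arbitrary X) (by rw [← h]; rfl)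
    have hsub : ({1, σ} : Finset (Equiv.Perm X)) ⊆ Finset.univ := Finset.subset_univ _
    rw [← Finset.sum_subset hsub]
    · rw [Finset.sum_pair hne]
      have h1 : ∏ i, M ((1 : Equiv.Perm X) i) i = 1 := by
        apply Finset.prod_eq_one
        intro i _
        rw [hMentry]
        simp [Ne.symm (hmove i)]
      have h2 : ∏ i, M (σ i) i = 1 := by
        apply Finset.prod_eq_one
        intro i _
        rw [hMentry]
        simp [hmove i]
      rw [h1, h2]
      simp [Units.smul_def]
    · intro τ _ hτ
      simp only [Finset.mem_insert, Finset.mem_singleton, not_or] at hτ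
      obtain ⟨hτ1, hτσ⟩ := hτ
      -- show the product vanishes
      have : ∏ i, M (τ i) i = 0 := by
        by_contra hprod
        have hfac : ∀ i, τ i = i ∨ τ i = σ i := by
          intro i
          by_contra h
          push_neg at h
          apply hprod
          apply Finset.prod_eq_zero (Finset.mem_univ i)
          rw [hMentry]
          simp [h.1, h.2]
        -- S closed under σ
        have hclosed : ∀ i, τ i = σ i → τ (σ i) = σ (σ i) := by
          intro i hi
          rcases hfac (σ i) with h | h
          · exfalso
            have := τ.injective (h.trans hi.symm)
            exact hmove i this
          · exact h
        by_cases hS : ∃ a, τ a = σ a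
        · obtain ⟨a, ha⟩ := hS
          have hall : ∀ k : ℕ, τ ((σ ^ k) a) = σ ((σ ^ k) a) := by
            intro k
            induction k with
            | zero => simpa using ha
            | succ n ih =>
              have := hclosed _ ih
              simpa [pow_succ', Equiv.Perm.mul_apply] using this
          apply hτσ
          ext b
          obtain ⟨k, hk⟩ := hc.exists_pow_eq (hmove a) (hmove b)
          rw [← hk]
          exact hall k
        · push_neg at hS
          apply hτ1
          ext b
          rcases hfac b with h | h
          · simpa using h
          · exact absurd h (hS b)
      rw [this]
      simp
  refine ⟨key, ?_, ?_⟩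
  · intro hodd
    have hs : Equiv.Perm.sign σ = 1 := by
      rw [hc.sign, hsupp]
      simp [Finset.card_univ, Odd.neg_one_pow hodd]
    rw [key, hs]
    norm_num
  · intro heven
    have hs : Equiv.Perm.sign σ = -1 := by
      rw [hc.sign, hsupp]
      simp [Finset.card_univ, Even.neg_one_pow heven]
    rw [key, hs]
    norm_num
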